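/- Let d ≥ 1, let n ∈ ℝ^d, and let x ∈ ℝ^d with P x ≠ 0. Then the function f : ℝ^d → ℝ defined by f(z) = ⟪n, P z / ‖P z‖⟫ is differentiable at x, and its gradient at x equals (1/‖P x‖) · P( n − (⟪P x, n⟫/‖P x‖²)·P x ). -/

import Mathlib

open scoped RealInnerProductSpace

/-- The all-ones vector `𝟙 ∈ ℝ^d`. -/
noncomputable def allOnes (d : ℕ) : EuclideanSpace ℝ (Fin d) :=
  (WithLp.equiv 2 (Fin d → ℝ)).symm (fun _ => 1)

/-- The mean-centering map `P x = x − ((∑ i, x i)/d) • 𝟙`, the orthogonal projection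
onto the hyperplane orthogonal to `𝟙`. -/
noncomputable def meanCenter {d : ℕ} (x : EuclideanSpace ℝ (Fin d)) :
    EuclideanSpace ℝ (Fin d) :=
  x - ((∑ i, x i) / d) • allOnes d

lemma allOnes_apply {d : ℕ} (i : Fin d) : allOnes d i = 1 := rfl

noncomputable def Lmap (d : ℕ) : EuclideanSpace ℝ (Fin d) →L[ℝ] EuclideanSpace ℝ (Fin d) :=
  ContinuousLinearMap.id ℝ _ - ((d : ℝ)⁻¹) • ((innerSL ℝ (allOnes d)).smulRight (allOnes d))

lemma inner_allOnes {d : ℕ} (v : EuclideanSpace ℝ (Fin d)) :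
    ⟪allOnes d, v⟫ = ∑ i, v i := by
  simp [PiLp.inner_apply, allOnes_apply, RCLike.inner_apply]

lemma meanCenter_eq {d : ℕ} (z : EuclideanSpace ℝ (Fin d)) :
    meanCenter z = Lmap d z := by
  simp only [meanCenter, Lmap, ContinuousLinearMap.sub_apply, ContinuousLinearMap.id_apply,
    ContinuousLinearMap.smul_apply, ContinuousLinearMap.smulRight_apply, innerSL_apply_apply,
    inner_allOnes, smul_smul, div_eq_inv_mul]

lemma Lmap_selfAdjoint {d : ℕ} (w v : EuclideanSpace ℝ (Fin d)) :
    ⟪Lmap d w, v⟫ = ⟪w, Lmap d v⟫ := by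
  simp only [Lmap, ContinuousLinearMap.sub_apply, ContinuousLinearMap.id_apply,
    ContinuousLinearMap.smul_apply, ContinuousLinearMap.smulRight_apply, innerSL_apply_apply,
    inner_sub_left, inner_sub_right, inner_smul_left, inner_smul_right, real_inner_smul_left,
    real_inner_smul_right]
  rw [real_inner_comm (allOnes d) w]
  simp only [map_inv₀, RCLike.conj_to_real, real_inner_comm v (allOnes d)]
  ring

lemma sum_meanCenter {d : ℕ} (hd : 1 ≤ d) (z : EuclideanSpace ℝ (Fin d)) :
    ∑ i, meanCenter z i = 0 := by
  have hd' : (d : ℝ) ≠ 0 := by positivity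
  simp [meanCenter, PiLp.sub_apply, PiLp.smul_apply, allOnes_apply, Finset.sum_sub_distrib]
  field_simp
  ring

lemma meanCenter_idem {d : ℕ} (hd : 1 ≤ d) (z : EuclideanSpace ℝ (Fin d)) :
    meanCenter (meanCenter z) = meanCenter z := by
  rw [show meanCenter (meanCenter z) =
    meanCenter z - ((∑ i, meanCenter z i) / d) • allOnes d from rfl, sum_meanCenter hd]
  simp

lemma meanCenter_fixed {d : ℕ} (hd : 1 ≤ d) (x : EuclideanSpace ℝ (Fin d)) :
    Lmap d (meanCenter x) = meanCenter x := by
  rw [← meanCenter_eq, meanCenter_idem hd]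

/-- **Gradient of an observable composed with LayerNorm** (key computation in the
proof of Theorem 1): `z ↦ ⟪n, P z/‖P z‖⟫` is differentiable at `x` (when `P x ≠ 0`)
with gradient `(1/‖P x‖) • P (n − (⟪P x, n⟫/‖P x‖²) • P x)`. -/
theorem gradient_layerNorm_observable {d : ℕ} (hd : 1 ≤ d)
    (n x : EuclideanSpace ℝ (Fin d)) (hx : meanCenter x ≠ 0) :
    DifferentiableAt ℝ (fun z => ⟪n, (‖meanCenter z‖)⁻¹ • meanCenter z⟫) x ∧
    gradient (fun z => ⟪n, (‖meanCenter z‖)⁻¹ • meanCenter z⟫) x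
      = (‖meanCenter x‖)⁻¹ •
        meanCenter (n - (⟪meanCenter x, n⟫ / ‖meanCenter x‖ ^ 2) • meanCenter x) := by
  set y := meanCenter x with hy
  have hny : ‖y‖ ≠ 0 := norm_ne_zero_iff.mpr hx
  have hmc : (fun z : EuclideanSpace ℝ (Fin d) => meanCenter z) = ⇑(Lmap d) :=
    funext meanCenter_eq
  have hL : HasFDerivAt (fun z : EuclideanSpace ℝ (Fin d) => meanCenter z) (Lmap d) x := by
    rw [hmc]; exact (Lmap d).hasFDerivAt
  have hsq : HasFDerivAt (fun z => ‖meanCenter z‖ ^ 2)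
      (2 • (innerSL ℝ y).comp (Lmap d)) x := hL.norm_sq
  have hnorm : HasFDerivAt (fun z => ‖meanCenter z‖)
      ((‖y‖)⁻¹ • (innerSL ℝ y).comp (Lmap d)) x := by
    have h0 : ‖y‖ ^ 2 ≠ 0 := pow_ne_zero 2 hny
    have := hsq.sqrt h0
    have hfun : (fun z : EuclideanSpace ℝ (Fin d) => Real.sqrt (‖meanCenter z‖ ^ 2)) = fun z => ‖meanCenter z‖ := by
      funext z; rw [Real.sqrt_sq (norm_nonneg _)]
    rw [hfun] at this
    refine this.congr_fderiv ?_
    ext v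
    rw [Real.sqrt_sq (norm_nonneg _)]
    simp only [ContinuousLinearMap.smul_apply, smul_eq_mul, ContinuousLinearMap.smul_apply,
      two_smul, ContinuousLinearMap.add_apply]
    rw [← hy]
    field_simp
    ring
  have hinv : HasFDerivAt (fun z => (‖meanCenter z‖)⁻¹)
      ((-(‖y‖ ^ 2)⁻¹) • ((‖y‖)⁻¹ • (innerSL ℝ y).comp (Lmap d))) x :=
    (hasDerivAt_inv hny).comp_hasFDerivAt x hnorm
  have hip : HasFDerivAt (fun z => ⟪n, meanCenter z⟫) ((innerSL ℝ n).comp (Lmap d)) x := by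
    have : (fun z : EuclideanSpace ℝ (Fin d) => ⟪n, meanCenter z⟫)
        = ⇑((innerSL ℝ n).comp (Lmap d)) := by
      funext z; simp [meanCenter_eq]
    rw [this]; exact ((innerSL ℝ n).comp (Lmap d)).hasFDerivAt
  have hmul := hinv.mul hip
  have hf : HasFDerivAt (fun z => ⟪n, (‖meanCenter z‖)⁻¹ • meanCenter z⟫)
      ((‖y‖)⁻¹ • (innerSL ℝ n).comp (Lmap d) +
        ⟪n, y⟫ • ((-(‖y‖ ^ 2)⁻¹) • ((‖y‖)⁻¹ • (innerSL ℝ y).comp (Lmap d)))) x := by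
    have hfun : (fun z => ⟪n, (‖meanCenter z‖)⁻¹ • meanCenter z⟫)
        = fun z => (‖meanCenter z‖)⁻¹ * ⟪n, meanCenter z⟫ := by
      funext z; rw [real_inner_smul_right]
    rw [hfun]
    exact hmul
  have hgrad : HasGradientAt (fun z => ⟪n, (‖meanCenter z‖)⁻¹ • meanCenter z⟫)
      ((‖y‖)⁻¹ • meanCenter (n - (⟪y, n⟫ / ‖y‖ ^ 2) • y)) x := by
    rw [hasGradientAt_iff_hasFDerivAt]
    refine hf.congr_fderiv ?_
    apply ContinuousLinearMap.ext
    intro v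
    rw [InnerProductSpace.toDual_apply_apply]
    simp only [ContinuousLinearMap.add_apply, ContinuousLinearMap.smul_apply,
      ContinuousLinearMap.comp_apply, innerSL_apply_apply, smul_eq_mul]
    rw [meanCenter_eq, map_sub, map_smul, meanCenter_fixed hd,
      real_inner_smul_left, inner_sub_left, real_inner_smul_left,
      ← Lmap_selfAdjoint n v, ← Lmap_selfAdjoint y v, meanCenter_fixed hd,
      real_inner_comm n y]
    field_simp
    ring
  exact ⟨hgrad.differentiableAt, hgrad.gradient⟩
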